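/- Suppose 0 < r ≤ d and σ > 0, K > 0. The function δ(k) := −((K/k)^{−(λ+κσ)/σ}·(k(1 − (k/K)^{−2λ/σ})σ − (k − K)(λ − κσ + (K/k)^{2λ/σ}(λ + κσ))))/(2λ), obtained by solving the first-order condition (FOC1) for the penalty in terms of the exercise boundary, is non-decreasing on [K, ∞): δ′(k) ≥ 0 for all k ≥ K. -/

import Mathlib

noncomputable section

/-- For `0 < r ≤ d`, the penalty `δ(k)` obtained by solving the first-order condition (FOC1)
for the penalty in terms of the exercise boundary `k` is non-decreasing on `[K, ∞)`. -/
theorem delta_of_boundary_nondecreasing (r d σ K : ℝ)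
    (hr : 0 < r) (hrd : r ≤ d) (hσ : 0 < σ) (hK : 0 < K)
    (lam κ : ℝ)
    (hlam : lam = Real.sqrt (2 * r + ((r - d - σ ^ 2 / 2) / σ) ^ 2))
    (hκ : κ = (r - d - σ ^ 2 / 2) / σ ^ 2)
    (δfun : ℝ → ℝ)
    (hδfun : δfun = fun k =>
      -((K / k) ^ (-((lam + κ * σ) / σ)) *
          (k * (1 - (k / K) ^ (-(2 * lam / σ))) * σ -
            (k - K) * (lam - κ * σ + (K / k) ^ (2 * lam / σ) * (lam + κ * σ)))) /
        (2 * lam)) :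
    ∀ k : ℝ, K ≤ k → 0 ≤ deriv δfun k := by
  intro k hk
  have hk0 : 0 < k := lt_of_lt_of_le hK hk
  have hκσ : κ * σ = (r - d - σ ^ 2 / 2) / σ := by
    rw [hκ]; field_simp
  have hlam0 : 0 < lam := by
    rw [hlam]; apply Real.sqrt_pos.mpr; positivity
  have hlamsq : lam ^ 2 = 2 * r + (κ * σ) ^ 2 := by
    rw [hlam, hκσ, Real.sq_sqrt (by positivity)]
  set p : ℝ := (lam + κ * σ) / σ with hpdef
  set q : ℝ := (lam - κ * σ) / σ with hqdef
  clear_value p q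
  have hp : 0 < p := by
    rw [hpdef]; apply div_pos _ hσ
    nlinarith [sq_nonneg (lam + κ * σ)]
  have hq : 0 < q := by
    rw [hqdef]; apply div_pos _ hσ
    nlinarith [sq_nonneg (lam - κ * σ)]
  have hq1p : p + 1 ≤ q := by
    have hdiff : q - p - 1 = 2 * (d - r) / σ ^ 2 := by
      rw [hpdef, hqdef, hκσ]; field_simp; ring
    have h2 : 0 ≤ 2 * (d - r) / σ ^ 2 := by
      apply div_nonneg (by linarith) (by positivity)
    linarith
  have hpσ : p * σ = lam + κ * σ := by rw [hpdef]; field_simp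
  have hqσ : q * σ = lam - κ * σ := by rw [hqdef]; field_simp
  set g : ℝ → ℝ := fun t =>
    σ / (2 * lam) * ((t / K) ^ p * ((q - 1) * t - q * K)
      + (t / K) ^ (-q) * ((1 + p) * t - p * K)) with hg
  clear_value g
  -- δfun agrees with g near k
  have heq : δfun =ᶠ[nhds k] g := by
    filter_upwards [eventually_gt_nhds hk0] with t ht
    have hb : 0 < t / K := div_pos ht hK
    have h1 : (K / t) ^ (-p) = (t / K) ^ p := by
      rw [Real.rpow_neg (by positivity), ← Real.inv_rpow (by positivity), inv_div]
    have h3 : (K / t) ^ (2 * lam / σ) = (t / K) ^ (-(2 * lam / σ)) := by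
      rw [Real.rpow_neg (by positivity), ← Real.inv_rpow (by positivity), inv_div]
    have h5 : (t / K) ^ (-q) = (t / K) ^ p * (t / K) ^ (-(2 * lam / σ)) := by
      rw [← Real.rpow_add hb]
      congr 1
      rw [hpdef, hqdef]; field_simp; ring
    rw [hδfun]
    simp only [hg]
    rw [h1, h3, h5, ← hpσ, ← hqσ]
    ring
  -- derivative of g
  have hb : 0 < k / K := div_pos hk0 hK
  set D : ℝ := σ / (2 * lam * k) * ((p + 1) * (q - 1) * k - p * q * K) *
    ((k / K) ^ p - (k / K) ^ (-q)) with hD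
  clear_value D
  have hgd : HasDerivAt g D k := by
    have hdiv : HasDerivAt (fun t : ℝ => t / K) (1 / K) k := (hasDerivAt_id k).div_const K
    have hA : HasDerivAt (fun t : ℝ => (t / K) ^ p) (1 / K * p * (k / K) ^ (p - 1)) k :=
      hdiv.rpow_const (Or.inl hb.ne')
    have hB : HasDerivAt (fun t : ℝ => (t / K) ^ (-q)) (1 / K * (-q) * (k / K) ^ (-q - 1)) k :=
      hdiv.rpow_const (Or.inl hb.ne')
    have hl1 : HasDerivAt (fun t : ℝ => (q - 1) * t - q * K) (q - 1) k := by
      simpa using ((hasDerivAt_id k).const_mul (q - 1)).sub_const (q * K)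
    have hl2 : HasDerivAt (fun t : ℝ => (1 + p) * t - p * K) (1 + p) k := by
      simpa using ((hasDerivAt_id k).const_mul (1 + p)).sub_const (p * K)
    have H := ((hA.mul hl1).add (hB.mul hl2)).const_mul (σ / (2 * lam))
    rw [hg]; refine H.congr_deriv ?_; symm
    have e1 : (k / K) ^ (p - 1) = (k / K) ^ p * (K / k) := by
      rw [Real.rpow_sub hb, Real.rpow_one, div_eq_mul_inv, inv_div]
    have e2 : (k / K) ^ (-q - 1) = (k / K) ^ (-q) * (K / k) := by
      rw [Real.rpow_sub hb, Real.rpow_one, div_eq_mul_inv, inv_div]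
    rw [hD, e1, e2]
    generalize (k / K) ^ p = X
    generalize (k / K) ^ (-q) = Y
    field_simp
    ring
  -- nonnegativity
  have hX : (k / K) ^ (-q) ≤ (k / K) ^ p := by
    apply Real.rpow_le_rpow_of_exponent_le ((one_le_div hK).mpr hk)
    linarith
  have hA0 : 0 ≤ (p + 1) * (q - 1) * k - p * q * K := by
    have h0 : (0:ℝ) ≤ (p + 1) * (q - 1) := by nlinarith
    have t1 : (p + 1) * (q - 1) * K ≤ (p + 1) * (q - 1) * k :=
      mul_le_mul_of_nonneg_left hk h0
    have t2 : p * q * K ≤ (p + 1) * (q - 1) * K := by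
      nlinarith [mul_nonneg (sub_nonneg.mpr hq1p) hK.le]
    linarith
  have : 0 ≤ D := by
    rw [hD]
    apply mul_nonneg (mul_nonneg (by positivity) hA0) (by linarith)
  rw [heq.deriv_eq, hgd.deriv]
  exact this

end
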